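/- Let A be an n×n matrix over a field with rows u,v (u<v) agreeing outside columns u,v, and let w ∉ {u,v}. Then (A_{u,u} − A_{v,u})·det(A^{w;u}) = (−1)^{u+v}(A_{v,v} − A_{u,v})·det(A^{w;v}). -/
import Mathlib


/-- Ratio of minors: if rows `u, v` of `A` agree outside columns `u, v` (`u < v`)
and `w ∉ {u, v}`, then
`(A u u − A v u)·det A^{w;u} = (−1)^{u+v}(A v v − A u v)·det A^{w;v}`. -/
theorem ratio_of_minors {K : Type*} [Field K] {n : ℕ}
    (A : Matrix (Fin (n + 1)) (Fin (n + 1)) K) (u v w : Fin (n + 1)) (huv : u < v)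
    (hrow : ∀ x, x ≠ u → x ≠ v → A u x = A v x) (hwu : w ≠ u) (hwv : w ≠ v) :
    (A u u - A v u) * (A.submatrix w.succAbove u.succAbove).det
      = (-1 : K) ^ ((u : ℕ) + (v : ℕ)) * (A v v - A u v) *
        (A.submatrix w.succAbove v.succAbove).det := by
  classical
  set r : Fin (n + 1) → K := fun x => A u x - A v x with hr
  set M := A.updateRow w r with hM
  -- det M = 0 since row w = row u - row v
  have hsub : r = A u + (-1 : K) • A v := by
    funext x; simp [hr, sub_eq_add_neg]
  have h1 : (A.updateRow w (A u)).det = 0 := by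
    apply Matrix.det_zero_of_row_eq hwu
    simp [Matrix.updateRow_apply, hwu.symm, Ne.symm hwu]
  have h2 : (A.updateRow w (A v)).det = 0 := by
    apply Matrix.det_zero_of_row_eq hwv
    simp [Matrix.updateRow_apply, hwv.symm, Ne.symm hwv]
  have hdet : M.det = 0 := by
    rw [hM, hsub, Matrix.det_updateRow_add, Matrix.det_updateRow_smul, h1, h2]
    ring
  -- submatrices of M agree with those of A
  have hsubm : ∀ j : Fin (n + 1),
      M.submatrix w.succAbove j.succAbove = A.submatrix w.succAbove j.succAbove := by
    intro j
    ext i k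
    simp [hM, Matrix.updateRow_apply, Fin.succAbove_ne w i]
  -- cofactor expansion along row w
  have hexp := Matrix.det_succ_row M w
  rw [hdet] at hexp
  have hMw : ∀ j, M w j = r j := by intro j; simp [hM]
  have huvne : u ≠ v := huv.ne
  have hzero : ∀ j ∈ Finset.univ \ ({u, v} : Finset (Fin (n + 1))),
      (-1 : K) ^ ((w : ℕ) + j) * M w j *
        (M.submatrix w.succAbove j.succAbove).det = 0 := by
    intro j hj
    simp only [Finset.mem_sdiff, Finset.mem_insert, Finset.mem_singleton, not_or] at hj
    have : r j = 0 := by simp [hr, hrow j hj.2.1 hj.2.2]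
    rw [hMw j, this]; ring
  have hsum : (0 : K) = ∑ j ∈ ({u, v} : Finset (Fin (n + 1))),
      (-1 : K) ^ ((w : ℕ) + j) * M w j *
        (M.submatrix w.succAbove j.succAbove).det := by
    exact hexp.trans (Finset.sum_subset (Finset.subset_univ _) (fun j _ hj =>
      hzero j (Finset.mem_sdiff.mpr ⟨Finset.mem_univ j, hj⟩))).symm
  rw [Finset.sum_pair huvne] at hsum
  rw [hMw, hMw, hsubm, hsubm] at hsum
  have hru : r u = A u u - A v u := rfl
  have hrv : r v = A u v - A v v := rfl
  rw [hru, hrv] at hsum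
  set s : K := (-1 : K) ^ ((w : ℕ) + u) with hs
  set t : K := (-1 : K) ^ ((w : ℕ) + v) with ht
  have hs2 : s * s = 1 := by
    rw [hs, ← pow_add, ← two_mul, pow_mul]; simp
  have hst : s * t = (-1 : K) ^ ((u : ℕ) + v) := by
    rw [hs, ht, ← pow_add]
    have h : (w : ℕ) + u + ((w : ℕ) + v) = 2 * w + ((u : ℕ) + v) := by ring
    rw [h, pow_add, pow_mul]; simp
  have heq : s * (A u u - A v u) * (A.submatrix w.succAbove u.succAbove).det
      + t * (A u v - A v v) * (A.submatrix w.succAbove v.succAbove).det = 0 := by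
    linear_combination -hsum
  linear_combination s * heq
    - ((A u u - A v u) * (A.submatrix w.succAbove u.succAbove).det) * hs2
    - ((A u v - A v v) * (A.submatrix w.succAbove v.succAbove).det) * hst
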